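/- Strong completeness of IMCalc: for every set Γ of L-formulas and every L-formula φ, Γ ⊢_{IMCalc} φ if and only if Γ ⊩^{inm} φ. -/

import Mathlib

/-
Common formalisation of the syntax and semantics of the intuitionistic
monotone modal logic IM, its generalised Hilbert calculi, intuitionistic
neighbourhood models, IFOM-structures, and related constructions.
-/

namespace IMPaper

/-- Formulas of the monotone modal language L. -/
inductive Formula : Type
  | prop : ℕ → Formula
  | bot  : Formula
  | and  : Formula → Formula → Formula
  | or   : Formula → Formula → Formula
  | imp  : Formula → Formula → Formula
  | box  : Formula → Formula
  | dia  : Formula → Formula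
deriving DecidableEq

/-- Negation: ¬φ abbreviates φ → ⊥. -/
def Formula.neg (φ : Formula) : Formula := φ.imp .bot

/-- Top: ⊤ abbreviates ⊥ → ⊥. -/
def Formula.top : Formula := Formula.bot.imp .bot

/-- Substitution of formulas for proposition letters. -/
def Formula.subst (σ : ℕ → Formula) : Formula → Formula
  | .prop i   => σ i
  | .bot      => .bot
  | .and φ ψ  => .and (φ.subst σ) (ψ.subst σ)
  | .or φ ψ   => .or (φ.subst σ) (ψ.subst σ)
  | .imp φ ψ  => .imp (φ.subst σ) (ψ.subst σ)
  | .box φ    => .box (φ.subst σ)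
  | .dia φ    => .dia (φ.subst σ)

private def pp0 : Formula := .prop 0
private def pp1 : Formula := .prop 1
private def pp2 : Formula := .prop 2

/-- A standard axiomatisation of intuitionistic propositional logic. -/
def IpcAx : Set Formula :=
  { Formula.imp pp0 (.imp pp1 pp0),
    Formula.imp (.imp pp0 (.imp pp1 pp2)) (.imp (.imp pp0 pp1) (.imp pp0 pp2)),
    Formula.imp (.and pp0 pp1) pp0,
    Formula.imp (.and pp0 pp1) pp1,
    Formula.imp pp0 (.imp pp1 (.and pp0 pp1)),
    Formula.imp pp0 (.or pp0 pp1),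
    Formula.imp pp1 (.or pp0 pp1),
    Formula.imp (.imp pp0 pp2) (.imp (.imp pp1 pp2) (.imp (.or pp0 pp1) pp2)),
    Formula.imp .bot pp0 }

/-- All substitution instances of a set of formulas. -/
def Instances (Ax : Set Formula) : Set Formula :=
  {φ | ∃ ψ ∈ Ax, ∃ σ, φ = ψ.subst σ}

/-- 𝒜x: all substitution instances of Ax together with all substitution
instances of the axioms of intuitionistic propositional logic. -/
def ScrAx (Ax : Set Formula) : Set Formula := Instances Ax ∪ Instances IpcAx

/-- The generalised Hilbert calculus GHC(Ax). -/
inductive GHC (Ax : Set Formula) : Set Formula → Formula → Prop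
  | el {Γ : Set Formula} {φ : Formula} : φ ∈ Γ → GHC Ax Γ φ
  | ax {Γ : Set Formula} {φ : Formula} : φ ∈ ScrAx Ax → GHC Ax Γ φ
  | mp {Γ : Set Formula} {φ ψ : Formula} :
      GHC Ax Γ φ → GHC Ax Γ (φ.imp ψ) → GHC Ax Γ ψ
  | monBox {Γ : Set Formula} {φ ψ : Formula} :
      GHC Ax ∅ (φ.imp ψ) → GHC Ax Γ ((Formula.box φ).imp (Formula.box ψ))
  | monDia {Γ : Set Formula} {φ ψ : Formula} :
      GHC Ax ∅ (φ.imp ψ) → GHC Ax Γ ((Formula.dia φ).imp (Formula.dia ψ))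

/-- The axioms (neg_a) and (I_◇) of the calculus IMCalc. -/
def IMAx : Set Formula :=
  { Formula.imp ((Formula.box pp0).and (Formula.dia pp0.neg)) .bot,
    Formula.imp ((Formula.box Formula.top).imp (Formula.dia pp0)) (Formula.dia pp0) }

/-- Derivability in the calculus IMCalc = GHC({(□p ∧ ◇¬p) → ⊥, (□⊤ → ◇p) → ◇p}). -/
def IMC : Set Formula → Formula → Prop := GHC IMAx

/-- An intuitionistic neighbourhood: a partial function W ⇀ 𝒫(W), encoded as a
domain together with a (total) value function whose values matter on the domain. -/
structure Nbhd (W : Type) where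
  dom : Set W
  val : W → Set W

/-- The data of an intuitionistic neighbourhood model. -/
structure INStruct (W : Type) where
  le : W → W → Prop
  N : Set (Nbhd W)
  V : ℕ → Set W

variable {W W' : Type}

/-- A set is upward closed w.r.t. the order of the structure. -/
def INStruct.Up (M : INStruct W) (s : Set W) : Prop :=
  ∀ ⦃w v : W⦄, M.le w v → w ∈ s → v ∈ s

/-- `M` is an intuitionistic neighbourhood model: the order is a partial order,
the domain of every neighbourhood is upward closed, and the valuation assigns
upward closed sets to proposition letters. -/
def INStruct.IsModel (M : INStruct W) : Prop :=
  IsPartialOrder W M.le ∧ (∀ a ∈ M.N, M.Up a.dom) ∧ ∀ i, M.Up (M.V i)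

/-- Truth of a formula at a world of an intuitionistic neighbourhood model. -/
def INStruct.sat (M : INStruct W) : Formula → W → Prop
  | .prop i, w  => w ∈ M.V i
  | .bot, _     => False
  | .and φ ψ, w => M.sat φ w ∧ M.sat ψ w
  | .or φ ψ, w  => M.sat φ w ∨ M.sat ψ w
  | .imp φ ψ, w => ∀ v, M.le w v → M.sat φ v → M.sat ψ v
  | .box φ, w   => ∃ a ∈ M.N, w ∈ a.dom ∧
      ∀ w', M.le w w' → ∀ v ∈ a.val w', M.sat φ v
  | .dia φ, w   => ∀ w', M.le w w' → ∀ a ∈ M.N, w' ∈ a.dom →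
      ∃ v ∈ a.val w', M.sat φ v

/-- Semantic consequence over the class of all intuitionistic neighbourhood models. -/
def INConseq (Γ : Set Formula) (φ : Formula) : Prop :=
  ∀ (W : Type) (M : INStruct W), M.IsModel →
    ∀ w : W, (∀ ψ ∈ Γ, M.sat ψ w) → M.sat φ w

/-- A coherent intuitionistic neighbourhood: conditions (N1) and (N2). -/
def INStruct.CoherentNbhd (M : INStruct W) (a : Nbhd W) : Prop :=
  (∀ ⦃w w' : W⦄, M.le w w' → w ∈ a.dom → ∀ v ∈ a.val w, ∃ v' ∈ a.val w', M.le v v') ∧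
  (∀ ⦃w : W⦄, w ∈ a.dom → ∀ v ∈ a.val w, ∀ v', M.le v v' →
      ∃ w', M.le w w' ∧ v' ∈ a.val w')

/-- A model is coherent if all its intuitionistic neighbourhoods are coherent. -/
def INStruct.Coherent (M : INStruct W) : Prop := ∀ a ∈ M.N, M.CoherentNbhd a

/-- Semantic consequence over the class of coherent intuitionistic neighbourhood models. -/
def CohConseq (Γ : Set Formula) (φ : Formula) : Prop :=
  ∀ (W : Type) (M : INStruct W), M.IsModel → M.Coherent →
    ∀ w : W, (∀ ψ ∈ Γ, M.sat ψ w) → M.sat φ w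

/-- The relation R: w R v iff v ∈ a(w) for some neighbourhood a of w. -/
def INStruct.R (M : INStruct W) (w v : W) : Prop :=
  ∃ a ∈ M.N, w ∈ a.dom ∧ v ∈ a.val w

/-- R~-Cartesian: w ≤~ v R~ w implies w = v (with ~ the equivalence closures). -/
def INStruct.RCartesian (M : INStruct W) : Prop :=
  ∀ w v, Relation.EqvGen M.le w v → Relation.EqvGen M.R v w → w = v

/-- N-Cartesian: w R~ v and w, v ∈ dom(a) imply a(w) = a(v). -/
def INStruct.NCartesian (M : INStruct W) : Prop :=
  ∀ a ∈ M.N, ∀ w v, Relation.EqvGen M.R w v → w ∈ a.dom → v ∈ a.dom →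
    a.val w = a.val v

/-- Cartesian: both R~-Cartesian and N-Cartesian. -/
def INStruct.Cartesian (M : INStruct W) : Prop := M.RCartesian ∧ M.NCartesian

/-- Isomorphism of intuitionistic neighbourhood structures. -/
def Isomorphic (M : INStruct W) (M' : INStruct W') : Prop :=
  ∃ (α : W → W') (ν : Nbhd W → Nbhd W'),
    Function.Bijective α ∧ Set.BijOn ν M.N M'.N ∧
    (∀ w v, M.le w v ↔ M'.le (α w) (α v)) ∧
    (∀ a ∈ M.N, ∀ w, w ∈ a.dom ↔ α w ∈ (ν a).dom) ∧
    (∀ a ∈ M.N, ∀ u ∈ a.dom, ∀ w, w ∈ a.val u ↔ α w ∈ (ν a).val (α u)) ∧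
    (∀ i w, w ∈ M.V i ↔ α w ∈ M'.V i)

end IMPaper
namespace IMPaper



abbrev Prv (Γ : Set Formula) (φ : Formula) : Prop := GHC IMAx Γ φ

def σ3 (A B C : Formula) : ℕ → Formula
  | 0 => A
  | 1 => B
  | _ => C

lemma mem_scrax_ipc {φ : Formula} (h : φ ∈ IpcAx) (σ : ℕ → Formula) :
    φ.subst σ ∈ ScrAx IMAx := Or.inr ⟨φ, h, σ, rfl⟩

lemma mem_scrax_im {φ : Formula} (h : φ ∈ IMAx) (σ : ℕ → Formula) :
    φ.subst σ ∈ ScrAx IMAx := Or.inl ⟨φ, h, σ, rfl⟩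

lemma axK (Γ : Set Formula) (A B : Formula) : Prv Γ (A.imp (B.imp A)) := by
  exact GHC.ax (mem_scrax_ipc (φ := pp0.imp (pp1.imp pp0)) (by simp [IpcAx]) (σ3 A B A))

lemma axS (Γ : Set Formula) (A B C : Formula) :
    Prv Γ ((A.imp (B.imp C)).imp ((A.imp B).imp (A.imp C))) := by
  exact GHC.ax (mem_scrax_ipc
    (φ := (pp0.imp (pp1.imp pp2)).imp ((pp0.imp pp1).imp (pp0.imp pp2)))
    (by simp [IpcAx]) (σ3 A B C))

lemma axAndL (Γ : Set Formula) (A B : Formula) : Prv Γ ((A.and B).imp A) := by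
  exact GHC.ax (mem_scrax_ipc (φ := (pp0.and pp1).imp pp0) (by simp [IpcAx]) (σ3 A B A))

lemma axAndR (Γ : Set Formula) (A B : Formula) : Prv Γ ((A.and B).imp B) := by
  exact GHC.ax (mem_scrax_ipc (φ := (pp0.and pp1).imp pp1) (by simp [IpcAx]) (σ3 A B A))

lemma axAndI (Γ : Set Formula) (A B : Formula) : Prv Γ (A.imp (B.imp (A.and B))) := by
  exact GHC.ax (mem_scrax_ipc (φ := pp0.imp (pp1.imp (pp0.and pp1))) (by simp [IpcAx]) (σ3 A B A))

lemma axOrL (Γ : Set Formula) (A B : Formula) : Prv Γ (A.imp (A.or B)) := by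
  exact GHC.ax (mem_scrax_ipc (φ := pp0.imp (pp0.or pp1)) (by simp [IpcAx]) (σ3 A B A))

lemma axOrR (Γ : Set Formula) (A B : Formula) : Prv Γ (B.imp (A.or B)) := by
  exact GHC.ax (mem_scrax_ipc (φ := pp1.imp (pp0.or pp1)) (by simp [IpcAx]) (σ3 A B A))

lemma axOrE (Γ : Set Formula) (A B C : Formula) :
    Prv Γ ((A.imp C).imp ((B.imp C).imp ((A.or B).imp C))) := by
  exact GHC.ax (mem_scrax_ipc
    (φ := (pp0.imp pp2).imp ((pp1.imp pp2).imp ((pp0.or pp1).imp pp2)))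
    (by simp [IpcAx]) (σ3 A B C))

lemma axEfq (Γ : Set Formula) (A : Formula) : Prv Γ (Formula.bot.imp A) := by
  exact GHC.ax (mem_scrax_ipc (φ := Formula.bot.imp pp0) (by simp [IpcAx]) (σ3 A A A))

lemma axNegA (Γ : Set Formula) (A : Formula) :
    Prv Γ (((Formula.box A).and (Formula.dia A.neg)).imp .bot) := by
  exact GHC.ax (mem_scrax_im
    (φ := Formula.imp ((Formula.box pp0).and (Formula.dia pp0.neg)) .bot)
    (by simp [IMAx]) (σ3 A A A))

lemma axIdia (Γ : Set Formula) (A : Formula) :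
    Prv Γ (((Formula.box Formula.top).imp (Formula.dia A)).imp (Formula.dia A)) := by
  exact GHC.ax (mem_scrax_im
    (φ := Formula.imp ((Formula.box Formula.top).imp (Formula.dia pp0)) (Formula.dia pp0))
    (by simp [IMAx]) (σ3 A A A))

lemma prv_imp_refl (Γ : Set Formula) (A : Formula) : Prv Γ (A.imp A) :=
  GHC.mp (axK Γ A A) (GHC.mp (axK Γ A (A.imp A)) (axS Γ A (A.imp A) A))

lemma prv_mono {Γ Γ' : Set Formula} {φ : Formula} (hs : Γ ⊆ Γ') (h : Prv Γ φ) :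
    Prv Γ' φ := by
  induction h with
  | el h => exact GHC.el (hs h)
  | ax h => exact GHC.ax h
  | mp _ _ ih1 ih2 => exact GHC.mp (ih1 hs) (ih2 hs)
  | monBox h => exact GHC.monBox h
  | monDia h => exact GHC.monDia h

lemma ded' {Δ : Set Formula} {ψ : Formula} (h : Prv Δ ψ) :
    ∀ {Γ : Set Formula} {φ : Formula}, Δ = insert φ Γ → Prv Γ (φ.imp ψ) := by
  induction h with
  | el h =>
    intro Γ φ hΔ
    subst hΔ
    rcases h with h | h
    · subst h; exact prv_imp_refl Γ _
    · exact GHC.mp (GHC.el h) (axK Γ _ _)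
  | ax h => intro Γ φ hΔ; exact GHC.mp (GHC.ax h) (axK Γ _ _)
  | mp _ _ ih1 ih2 =>
    intro Γ φ hΔ
    exact GHC.mp (ih1 hΔ) (GHC.mp (ih2 hΔ) (axS Γ _ _ _))
  | monBox h => intro Γ φ hΔ; exact GHC.mp (GHC.monBox h) (axK Γ _ _)
  | monDia h => intro Γ φ hΔ; exact GHC.mp (GHC.monDia h) (axK Γ _ _)

lemma ded {Γ : Set Formula} {φ ψ : Formula} (h : Prv (insert φ Γ) ψ) :
    Prv Γ (φ.imp ψ) := ded' h rfl

lemma prv_imp_trans {Γ : Set Formula} {A B C : Formula}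
    (h1 : Prv Γ (A.imp B)) (h2 : Prv Γ (B.imp C)) : Prv Γ (A.imp C) :=
  GHC.mp h1 (GHC.mp (GHC.mp h2 (axK Γ _ A)) (axS Γ A B C))

lemma prv_and_intro {Γ : Set Formula} {A B : Formula}
    (h1 : Prv Γ A) (h2 : Prv Γ B) : Prv Γ (A.and B) :=
  GHC.mp h2 (GHC.mp h1 (axAndI Γ A B))

lemma prv_efq {Γ : Set Formula} {A : Formula} (h : Prv Γ .bot) : Prv Γ A :=
  GHC.mp h (axEfq Γ A)

lemma compact {Γ : Set Formula} {φ : Formula} (h : Prv Γ φ) :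
    ∃ Γ₀ : Set Formula, Γ₀ ⊆ Γ ∧ Γ₀.Finite ∧ Prv Γ₀ φ := by
  induction h with
  | @el Γ φ h => exact ⟨{φ}, Set.singleton_subset_iff.2 h, Set.finite_singleton _,
      GHC.el rfl⟩
  | ax h => exact ⟨∅, Set.empty_subset _, Set.finite_empty, GHC.ax h⟩
  | mp _ _ ih1 ih2 =>
    obtain ⟨Γ₁, hs1, hf1, hp1⟩ := ih1
    obtain ⟨Γ₂, hs2, hf2, hp2⟩ := ih2
    exact ⟨Γ₁ ∪ Γ₂, Set.union_subset hs1 hs2, hf1.union hf2,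
      GHC.mp (prv_mono Set.subset_union_left hp1)
        (prv_mono Set.subset_union_right hp2)⟩
  | monBox h => exact ⟨∅, Set.empty_subset _, Set.finite_empty, GHC.monBox h⟩
  | monDia h => exact ⟨∅, Set.empty_subset _, Set.finite_empty, GHC.monDia h⟩

/-- Prime theories. -/
structure IsPrime (T : Set Formula) : Prop where
  closed : ∀ {ψ}, Prv T ψ → ψ ∈ T
  nbot : Formula.bot ∉ T
  prime : ∀ {α β}, α.or β ∈ T → α ∈ T ∨ β ∈ T

lemma finite_subset_chain {c : Set (Set Formula)} (hchain : IsChain (· ⊆ ·) c)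
    (hne : c.Nonempty) {s : Set Formula} (hfin : s.Finite) :
    s ⊆ ⋃₀ c → ∃ t ∈ c, s ⊆ t := by
  refine Set.Finite.induction_on (motive := fun s _ => s ⊆ ⋃₀ c → ∃ t ∈ c, s ⊆ t) s hfin ?_ ?_
  · exact fun _ => hne.imp fun t ht => ⟨ht, Set.empty_subset _⟩
  · intro x s _ _ ih hsub
    have hx : x ∈ ⋃₀ c := hsub (Set.mem_insert _ _)
    obtain ⟨t1, ht1, hxt1⟩ := hx
    obtain ⟨t2, ht2, hst2⟩ := ih (fun y hy => hsub (Set.mem_insert_of_mem _ hy))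
    rcases eq_or_ne t1 t2 with rfl | hne'
    · exact ⟨t1, ht1, Set.insert_subset hxt1 hst2⟩
    rcases hchain ht1 ht2 hne' with h | h
    · exact ⟨t2, ht2, Set.insert_subset (h hxt1) hst2⟩
    · exact ⟨t1, ht1, Set.insert_subset hxt1 (hst2.trans h)⟩

/-- Lindenbaum lemma. -/
lemma lindenbaum {Γ : Set Formula} {δ : Formula} (h : ¬ Prv Γ δ) :
    ∃ T : Set Formula, IsPrime T ∧ Γ ⊆ T ∧ ¬ Prv T δ := by
  have hz := zorn_subset_nonempty {Δ : Set Formula | ¬ Prv Δ δ} ?_ Γ h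
  · obtain ⟨T, hΓT, hTmem, hTmax⟩ := hz
    have hclosed : ∀ {ψ}, Prv T ψ → ψ ∈ T := by
      intro ψ hψ
      by_contra hne
      have hmem : ¬ Prv (insert ψ T) δ := by
        intro hd
        exact hTmem (GHC.mp hψ (ded hd))
      have := hTmax hmem (Set.subset_insert _ _)
      exact hne (this (Set.mem_insert _ _))
    refine ⟨T, ⟨hclosed, ?_, ?_⟩, hΓT, hTmem⟩
    · intro hbot
      exact hTmem (prv_efq (GHC.el hbot))
    · intro α β hor
      by_contra hne
      push_neg at hne
      have h1 : Prv T (α.imp δ) := by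
        apply ded
        by_contra hd
        have := hTmax hd (Set.subset_insert _ _)
        exact hne.1 (this (Set.mem_insert _ _))
      have h2 : Prv T (β.imp δ) := by
        apply ded
        by_contra hd
        have := hTmax hd (Set.subset_insert _ _)
        exact hne.2 (this (Set.mem_insert _ _))
      exact hTmem (GHC.mp (GHC.el hor) (GHC.mp h2 (GHC.mp h1 (axOrE T α β δ))))
  · intro c hcS hchain hcne
    refine ⟨⋃₀ c, ?_, fun s hs => Set.subset_sUnion_of_mem hs⟩
    intro hd
    obtain ⟨Γ₀, hsub, hfin, hp⟩ := compact hd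
    obtain ⟨t, htc, hst⟩ := finite_subset_chain hchain hcne hfin hsub
    exact hcS htc (prv_mono hst hp)


/-! ### Canonical model -/

/-- Prime theories as a type. -/
def PT : Type := {T : Set Formula // IsPrime T}

/-- Canonical worlds: prime theories with a copy index. -/
abbrev CW : Type := PT × ℕ

/-- Box-witnessing canonical neighbourhoods. -/
def aN (χ : Formula) : Nbhd CW :=
  ⟨{x | Formula.box χ ∈ x.1.1}, fun _ => {y | χ ∈ y.1.1}⟩

/-- Diamond-refuting canonical neighbourhoods. -/
def bN (φ : Formula) : Nbhd CW :=
  ⟨{x | Formula.box Formula.top ∈ x.1.1},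
   fun x => if x.2 % 2 = 1 then Set.univ
            else {y | φ ∈ y.1.1 → Formula.dia φ ∈ x.1.1}⟩

/-- The canonical intuitionistic neighbourhood model. -/
def canM : INStruct CW where
  le x y := x.1.1 ⊆ y.1.1 ∧ x.2 ≤ y.2
  N := Set.range aN ∪ Set.range bN
  V i := {x | Formula.prop i ∈ x.1.1}

lemma canM_isModel : canM.IsModel := by
  refine ⟨{ refl := fun x => ⟨Set.Subset.rfl, le_refl _⟩,
            trans := fun x y z h1 h2 => ⟨h1.1.trans h2.1, h1.2.trans h2.2⟩,
            antisymm := fun x y h1 h2 =>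
              Prod.ext (Subtype.ext (Set.Subset.antisymm h1.1 h2.1))
                (le_antisymm h1.2 h2.2) }, ?_, ?_⟩
  · rintro a (⟨χ, rfl⟩ | ⟨φ, rfl⟩) x y hxy hx
    · exact hxy.1 hx
    · exact hxy.1 hx
  · exact fun i x y hxy hx => hxy.1 hx

lemma prime_closed_mem {T : Set Formula} (hT : IsPrime T) {φ : Formula}
    (h : Prv T φ) : φ ∈ T := hT.closed h

/-- In a prime theory containing `□χ` and `◇φ`, the set `{χ, φ}` is consistent. -/
lemma pair_consistent {T : Set Formula} (hT : IsPrime T) {χ φ : Formula}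
    (hbox : Formula.box χ ∈ T) (hdia : Formula.dia φ ∈ T) :
    ¬ Prv (insert χ (insert φ (∅ : Set Formula))) .bot := by
  intro hcon
  have h1 : Prv (∅ : Set Formula) (φ.imp (χ.imp .bot)) := ded (ded hcon)
  have h2 : Prv T ((Formula.dia φ).imp (Formula.dia χ.neg)) := GHC.monDia h1
  have h3 : Prv T (Formula.dia χ.neg) := GHC.mp (GHC.el hdia) h2
  have h4 : Prv T ((Formula.box χ).and (Formula.dia χ.neg)) :=
    prv_and_intro (GHC.el hbox) h3
  exact hT.nbot (hT.closed (GHC.mp h4 (axNegA T χ)))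

/-- A formula whose diamond belongs to a prime theory containing `□⊤` is consistent. -/
lemma dia_consistent {T : Set Formula} (hT : IsPrime T) {φ : Formula}
    (hbt : Formula.box Formula.top ∈ T) (hdia : Formula.dia φ ∈ T) :
    ¬ Prv (insert φ (∅ : Set Formula)) .bot := by
  intro hcon
  have h1 : Prv (∅ : Set Formula) (φ.imp Formula.top.neg) := by
    have h0 : Prv ((∅ : Set Formula)) (φ.imp .bot) := ded hcon
    exact prv_imp_trans h0 (axK ∅ Formula.bot Formula.top)
  have h2 : Prv T (Formula.dia Formula.top.neg) :=
    GHC.mp (GHC.el hdia) (GHC.monDia h1)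
  have h3 : Prv T ((Formula.box Formula.top).and (Formula.dia Formula.top.neg)) :=
    prv_and_intro (GHC.el hbt) h2
  exact hT.nbot (hT.closed (GHC.mp h3 (axNegA T Formula.top)))

/-- If `◇φ ∈ T` and `◇ψ ∉ T` then `φ ⊬ ψ`. -/
lemma dia_not_imp {T : Set Formula} (hT : IsPrime T) {φ ψ : Formula}
    (hdia : Formula.dia φ ∈ T) (hnd : Formula.dia ψ ∉ T) :
    ¬ Prv (insert φ (∅ : Set Formula)) ψ := by
  intro hcon
  have h1 : Prv (∅ : Set Formula) (φ.imp ψ) := ded hcon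
  exact hnd (hT.closed (GHC.mp (GHC.el hdia) (GHC.monDia h1)))

/-- If all prime theories containing `Γ` contain `ψ`, then `Γ ⊢ ψ`. -/
lemma prv_of_all_primes {Γ : Set Formula} {ψ : Formula}
    (h : ∀ T : Set Formula, IsPrime T → Γ ⊆ T → ψ ∈ T) : Prv Γ ψ := by
  by_contra hnp
  obtain ⟨T, hT, hsub, hnd⟩ := lindenbaum hnp
  exact hnd (GHC.el (h T hT hsub))

/-- The truth lemma for the canonical model. -/
theorem truth_lemma (φ : Formula) : ∀ (T : PT) (n : ℕ),
    canM.sat φ (T, n) ↔ φ ∈ T.1 := by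
  induction φ with
  | prop i => intro T n; exact Iff.rfl
  | bot => intro T n; exact ⟨False.elim, fun h => T.2.nbot h⟩
  | and φ ψ ihφ ihψ =>
    intro T n
    constructor
    · rintro ⟨h1, h2⟩
      exact T.2.closed (prv_and_intro (GHC.el ((ihφ T n).1 h1)) (GHC.el ((ihψ T n).1 h2)))
    · intro h
      exact ⟨(ihφ T n).2 (T.2.closed (GHC.mp (GHC.el h) (axAndL T.1 φ ψ))),
             (ihψ T n).2 (T.2.closed (GHC.mp (GHC.el h) (axAndR T.1 φ ψ)))⟩
  | or φ ψ ihφ ihψ =>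
    intro T n
    constructor
    · rintro (h | h)
      · exact T.2.closed (GHC.mp (GHC.el ((ihφ T n).1 h)) (axOrL T.1 φ ψ))
      · exact T.2.closed (GHC.mp (GHC.el ((ihψ T n).1 h)) (axOrR T.1 φ ψ))
    · intro h
      rcases T.2.prime h with h' | h'
      · exact Or.inl ((ihφ T n).2 h')
      · exact Or.inr ((ihψ T n).2 h')
  | imp φ ψ ihφ ihψ =>
    intro T n
    constructor
    · intro hsat
      by_contra hni
      have hnp : ¬ Prv (insert φ T.1) ψ := fun hd => hni (T.2.closed (ded hd))
      obtain ⟨S, hS, hsub, hnd⟩ := lindenbaum hnp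
      have hle : canM.le (T, n) ((⟨S, hS⟩ : PT), n) :=
        ⟨fun x hx => hsub (Set.mem_insert_of_mem _ hx), le_refl _⟩
      have hφ : canM.sat φ (⟨S, hS⟩, n) := (ihφ ⟨S, hS⟩ n).2 (hsub (Set.mem_insert _ _))
      exact hnd (GHC.el ((ihψ ⟨S, hS⟩ n).1 (hsat _ hle hφ)))
    · intro h v hle hφ
      refine (ihψ v.1 v.2).2 (v.1.2.closed (GHC.mp (GHC.el ?_) (GHC.el (hle.1 h))))
      exact (ihφ v.1 v.2).1 hφ
  | box φ ihφ =>
    intro T n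
    constructor
    · rintro ⟨a, ha, hdom, hval⟩
      rcases ha with ⟨χ, rfl⟩ | ⟨ψ', rfl⟩
      · -- a = aN χ
        have hχφ : Prv (insert χ (∅ : Set Formula)) φ := by
          apply prv_of_all_primes
          intro S hS hsub
          have : canM.sat φ ((⟨S, hS⟩ : PT), 0) := by
            apply hval (T, n) ⟨Set.Subset.rfl, le_refl _⟩
            exact hsub (Set.mem_insert _ _)
          exact (ihφ ⟨S, hS⟩ 0).1 this
        have h1 : Prv T.1 ((Formula.box χ).imp (Formula.box φ)) :=
          GHC.monBox (ded hχφ)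
        exact T.2.closed (GHC.mp (GHC.el hdom) h1)
      · -- a = bN ψ'
        have hall : ∀ S : Set Formula, IsPrime S → (∅ : Set Formula) ⊆ S → φ ∈ S := by
          intro S hS _
          have hle : canM.le (T, n) (T, 2 * n + 1) := ⟨Set.Subset.rfl, by omega⟩
          have hv : ((⟨S, hS⟩ : PT), 0) ∈ (bN ψ').val (T, 2 * n + 1) := by
            simp only [bN]
            rw [if_pos (by omega)]
            exact Set.mem_univ _
          exact (ihφ ⟨S, hS⟩ 0).1 (hval _ hle _ hv)
        have h0 : Prv (∅ : Set Formula) φ := prv_of_all_primes hall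
        have h1 : Prv (∅ : Set Formula) (Formula.top.imp φ) :=
          GHC.mp h0 (axK ∅ φ Formula.top)
        have h2 : Prv T.1 ((Formula.box Formula.top).imp (Formula.box φ)) :=
          GHC.monBox h1
        exact T.2.closed (GHC.mp (GHC.el hdom) h2)
    · intro h
      refine ⟨aN φ, Or.inl ⟨φ, rfl⟩, h, ?_⟩
      rintro w' _ v hv
      exact (ihφ v.1 v.2).2 hv
  | dia φ ihφ =>
    intro T n
    constructor
    · intro hsat
      by_contra hnd
      have hnp : ¬ Prv (insert (Formula.box Formula.top) T.1) (Formula.dia φ) := by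
        intro hd
        exact hnd (T.2.closed (GHC.mp (ded hd) (axIdia T.1 φ)))
      obtain ⟨U, hU, hsub, hUnd⟩ := lindenbaum hnp
      have hle : canM.le (T, n) ((⟨U, hU⟩ : PT), 2 * n + 2) :=
        ⟨fun x hx => hsub (Set.mem_insert_of_mem _ hx), by omega⟩
      have hdom : ((⟨U, hU⟩ : PT), 2 * n + 2) ∈ (bN φ).dom :=
        hsub (Set.mem_insert _ _)
      obtain ⟨v, hv, hsatφ⟩ := hsat _ hle (bN φ) (Or.inr ⟨φ, rfl⟩) hdom
      have hv' : φ ∈ v.1.1 → Formula.dia φ ∈ U := by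
        have : (bN φ).val (⟨U, hU⟩, 2 * n + 2) =
            {y | φ ∈ y.1.1 → Formula.dia φ ∈ U} := by
          simp only [bN]
          rw [if_neg (by omega)]
        rw [this] at hv
        exact hv
      exact hUnd (GHC.el (hv' ((ihφ v.1 v.2).1 hsatφ)))
    · intro h w' hle a ha hdom
      have hdiaw : Formula.dia φ ∈ w'.1.1 := hle.1 h
      rcases ha with ⟨χ, rfl⟩ | ⟨ψ', rfl⟩
      · -- aN χ
        have hbox : Formula.box χ ∈ w'.1.1 := hdom
        have hcon := pair_consistent w'.1.2 hbox hdiaw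
        obtain ⟨R, hR, hsub, _⟩ := lindenbaum hcon
        refine ⟨((⟨R, hR⟩ : PT), 0), hsub (Set.mem_insert _ _), ?_⟩
        exact (ihφ ⟨R, hR⟩ 0).2 (hsub (Set.mem_insert_of_mem _ (Set.mem_insert _ _)))
      · -- bN ψ'
        have hbt : Formula.box Formula.top ∈ w'.1.1 := hdom
        by_cases hpar : w'.2 % 2 = 1
        · have hcon := dia_consistent w'.1.2 hbt hdiaw
          obtain ⟨R, hR, hsub, _⟩ := lindenbaum hcon
          refine ⟨((⟨R, hR⟩ : PT), 0), ?_, (ihφ ⟨R, hR⟩ 0).2 (hsub (Set.mem_insert _ _))⟩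
          simp only [bN]
          rw [if_pos hpar]
          exact Set.mem_univ _
        · by_cases hψ' : Formula.dia ψ' ∈ w'.1.1
          · have hcon := dia_consistent w'.1.2 hbt hdiaw
            obtain ⟨R, hR, hsub, _⟩ := lindenbaum hcon
            refine ⟨((⟨R, hR⟩ : PT), 0), ?_, (ihφ ⟨R, hR⟩ 0).2 (hsub (Set.mem_insert _ _))⟩
            simp only [bN]
            rw [if_neg hpar]
            exact fun _ => hψ'
          · have hcon := dia_not_imp w'.1.2 hdiaw hψ'
            obtain ⟨R, hR, hsub, hnd⟩ := lindenbaum hcon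
            refine ⟨((⟨R, hR⟩ : PT), 0), ?_, (ihφ ⟨R, hR⟩ 0).2 (hsub (Set.mem_insert _ _))⟩
            simp only [bN]
            rw [if_neg hpar]
            intro hmem
            exact (hnd (GHC.el hmem)).elim



/-! ### Soundness -/

section Soundness

variable {W : Type} {M : INStruct W} (hM : M.IsModel)
include hM

lemma le_refl' (w : W) : M.le w w := hM.1.toIsPreorder.toRefl.refl w

lemma le_trans' {u v w : W} (h1 : M.le u v) (h2 : M.le v w) : M.le u w :=
  hM.1.toIsPreorder.toIsTrans.trans _ _ _ h1 h2

/-- Persistence of truth. -/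
lemma persist (φ : Formula) : ∀ {w v : W}, M.le w v → M.sat φ w → M.sat φ v := by
  induction φ with
  | prop i => intro w v h hw; exact hM.2.2 i h hw
  | bot => intro w v _ hw; exact hw
  | and φ ψ ihφ ihψ => intro w v h hw; exact ⟨ihφ h hw.1, ihψ h hw.2⟩
  | or φ ψ ihφ ihψ =>
    intro w v h hw
    rcases hw with hw | hw
    · exact Or.inl (ihφ h hw)
    · exact Or.inr (ihψ h hw)
  | imp φ ψ ihφ ihψ =>
    intro w v h hw u hu hφ
    exact hw u (le_trans' hM h hu) hφ
  | box φ ih =>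
    rintro w v h ⟨a, ha, hdom, hval⟩
    exact ⟨a, ha, hM.2.1 a ha h hdom, fun w' hw' => hval w' (le_trans' hM h hw')⟩
  | dia φ ih =>
    intro w v h hw w' hw' a ha hdom
    exact hw w' (le_trans' hM h hw') a ha hdom

lemma sat_top (w : W) : M.sat Formula.top w := fun v _ h => h

lemma valid_K (A B : Formula) (w : W) : M.sat (A.imp (B.imp A)) w := by
  intro v _ hA v' hvv' _
  exact persist hM A hvv' hA

lemma valid_S (A B C : Formula) (w : W) :
    M.sat ((A.imp (B.imp C)).imp ((A.imp B).imp (A.imp C))) w := by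
  intro v _ h1 v' hvv' h2 v'' hv'v'' h3
  exact h1 v'' (le_trans' hM hvv' hv'v'') h3 v'' (le_refl' hM v'')
    (h2 v'' hv'v'' h3)

lemma valid_AndL (A B : Formula) (w : W) : M.sat ((A.and B).imp A) w :=
  fun v _ h => h.1

lemma valid_AndR (A B : Formula) (w : W) : M.sat ((A.and B).imp B) w :=
  fun v _ h => h.2

lemma valid_AndI (A B : Formula) (w : W) : M.sat (A.imp (B.imp (A.and B))) w := by
  intro v _ hA v' hvv' hB
  exact ⟨persist hM A hvv' hA, hB⟩

lemma valid_OrL (A B : Formula) (w : W) : M.sat (A.imp (A.or B)) w :=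
  fun v _ h => Or.inl h

lemma valid_OrR (A B : Formula) (w : W) : M.sat (B.imp (A.or B)) w :=
  fun v _ h => Or.inr h

lemma valid_OrE (A B C : Formula) (w : W) :
    M.sat ((A.imp C).imp ((B.imp C).imp ((A.or B).imp C))) w := by
  intro v _ h1 v' hvv' h2 v'' hv'v'' h3
  rcases h3 with h3 | h3
  · exact h1 v'' (le_trans' hM hvv' hv'v'') h3
  · exact h2 v'' hv'v'' h3

lemma valid_Efq (A : Formula) (w : W) : M.sat (Formula.bot.imp A) w :=
  fun v _ h => h.elim

lemma valid_NegA (A : Formula) (w : W) :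
    M.sat (((Formula.box A).and (Formula.dia A.neg)).imp .bot) w := by
  rintro v _ ⟨⟨a, ha, hdom, hval⟩, hdia⟩
  obtain ⟨u, hu, hnA⟩ := hdia v (le_refl' hM v) a ha hdom
  exact hnA u (le_refl' hM u) (hval v (le_refl' hM v) u hu)

lemma valid_Idia (A : Formula) (w : W) :
    M.sat (((Formula.box Formula.top).imp (Formula.dia A)).imp (Formula.dia A)) w := by
  intro v _ h w' hvw' a ha hdom
  have hbt : M.sat (Formula.box Formula.top) w' :=
    ⟨a, ha, hdom, fun w'' _ u _ => sat_top hM u⟩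
  exact h w' hvw' hbt w' (le_refl' hM w') a ha hdom

lemma valid_scrax {ψ : Formula} (h : ψ ∈ ScrAx IMAx) (w : W) : M.sat ψ w := by
  rcases h with ⟨ψ₀, h₀, σ, rfl⟩ | ⟨ψ₀, h₀, σ, rfl⟩
  · simp only [IMAx, Set.mem_insert_iff, Set.mem_singleton_iff] at h₀
    rcases h₀ with rfl | rfl
    · exact valid_NegA hM (σ 0) w
    · exact valid_Idia hM (σ 0) w
  · simp only [IpcAx, Set.mem_insert_iff, Set.mem_singleton_iff] at h₀
    rcases h₀ with rfl | rfl | rfl | rfl | rfl | rfl | rfl | rfl | rfl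
    · exact valid_K hM (σ 0) (σ 1) w
    · exact valid_S hM (σ 0) (σ 1) (σ 2) w
    · exact valid_AndL hM (σ 0) (σ 1) w
    · exact valid_AndR hM (σ 0) (σ 1) w
    · exact valid_AndI hM (σ 0) (σ 1) w
    · exact valid_OrL hM (σ 0) (σ 1) w
    · exact valid_OrR hM (σ 0) (σ 1) w
    · exact valid_OrE hM (σ 0) (σ 1) (σ 2) w
    · exact valid_Efq hM (σ 0) w

end Soundness

theorem soundness {Γ : Set Formula} {φ : Formula} (h : IMC Γ φ) : INConseq Γ φ := by
  induction h with
  | el h => exact fun W M hM w hw => hw _ h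
  | ax h => exact fun W M hM w _ => valid_scrax hM h w
  | mp _ _ ih1 ih2 =>
    intro W M hM w hw
    exact ih2 W M hM w hw w (le_refl' hM w) (ih1 W M hM w hw)
  | @monBox Γ α β h ih =>
    intro W M hM w hw v hwv hbox
    obtain ⟨a, ha, hdom, hval⟩ := hbox
    refine ⟨a, ha, hdom, fun w' hw' u hu => ?_⟩
    exact ih W M hM u (fun ψ hψ => hψ.elim) u (le_refl' hM u) (hval w' hw' u hu)
  | @monDia Γ α β h ih =>
    intro W M hM w hw v hwv hdia w' hw' a ha hdom
    obtain ⟨u, hu, hα⟩ := hdia w' hw' a ha hdom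
    exact ⟨u, hu, ih W M hM u (fun ψ hψ => hψ.elim) u (le_refl' hM u) hα⟩

theorem imcalc_complete' (Γ : Set Formula) (φ : Formula) :
    IMC Γ φ ↔ INConseq Γ φ := by
  constructor
  · exact soundness
  · intro h
    by_contra hnp
    obtain ⟨T, hT, hsub, hnd⟩ := lindenbaum hnp
    have hsat := h CW canM canM_isModel ((⟨T, hT⟩ : PT), 0)
      (fun ψ hψ => (truth_lemma ψ ⟨T, hT⟩ 0).2 (hsub hψ))
    exact hnd (GHC.el ((truth_lemma φ ⟨T, hT⟩ 0).1 hsat))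


/-- Strong completeness of IMCalc: Γ ⊢_{IMCalc} φ iff Γ ⊩^{inm} φ. -/
theorem imcalc_complete (Γ : Set Formula) (φ : Formula) :
    IMC Γ φ ↔ INConseq Γ φ :=
  imcalc_complete' Γ φ

end IMPaper
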